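/- Let q ≥ 1 and let S_1, …, S_m be 3-element subsets of {1,…,3q}, with S_i = {x_{i,1}, x_{i,2}, x_{i,3}}. Let H be the comb graph with spine path ρ_{1,1} — ρ_{1,2} — ρ_{2,1} — ρ_{2,2} — … — ρ_{m,1} — ρ_{m,2} and, for each i ∈ {1,…,m}, the two teeth ρ_{i,1} — a_i¹ — e_{i,1} — e_{i,2} — e_{i,3} — b_i¹ and ρ_{i,2} — a_i² — b_i². Color the vertices by c(a_i¹) = c(a_i²) = i, c(b_i¹) = c(b_i²) = m + i, c(e_{i,j}) = 2m + x_{i,j} for j ∈ {1,2,3}, and c(ρ_{i,j}) = 2m + 3q + 2(i−1) + j for j ∈ {1,2}, and let M be the multiset containing each color of {1, …, 4m + 3q} exactly once. Then (1) the bandwidth of H is at most 6, and (2) (H, c, M) has a motif solution if and only if there exists 𝒯 ⊆ {1,…,m} such that every element of {1,…,3q} belongs to exactly one set S_i with i ∈ 𝒯 (an exact cover by 3-sets). -/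

import Mathlib

/-- A motif solution of an instance `(G, c, M)`: a set `R` of vertices such that the
induced subgraph `G[R]` is connected and the multiset of colors of `R` equals `M`. -/
def IsMotifSolution {V C : Type*} (G : SimpleGraph V) (c : V → C) (M : Multiset C)
    (R : Finset V) : Prop :=
  (G.induce (R : Set V)).Connected ∧ Multiset.map c R.val = M

/-- The comb graph of Statement 10 on vertex set `Fin m × Fin 9`:
`(i,0) = ρ_{i,1}`, `(i,1) = ρ_{i,2}` (spine), `(i,2) = aᵢ¹`, `(i,3), (i,4), (i,5)` are
`e_{i,1}, e_{i,2}, e_{i,3}`, `(i,6) = bᵢ¹`, `(i,7) = aᵢ²`, `(i,8) = bᵢ²`.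
Edges: spine `ρ_{i,1}—ρ_{i,2}—ρ_{i+1,1}`, tooth `ρ_{i,1}—aᵢ¹—e_{i,1}—e_{i,2}—e_{i,3}—bᵢ¹`,
and tooth `ρ_{i,2}—aᵢ²—bᵢ²`. -/
def combRel (m : ℕ) (a b : Fin m × Fin 9) : Prop :=
  (a.1 = b.1 ∧ ((a.2.val = 0 ∧ b.2.val = 1) ∨ (a.2.val = 0 ∧ b.2.val = 2) ∨
    (a.2.val = 2 ∧ b.2.val = 3) ∨ (a.2.val = 3 ∧ b.2.val = 4) ∨
    (a.2.val = 4 ∧ b.2.val = 5) ∨ (a.2.val = 5 ∧ b.2.val = 6) ∨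
    (a.2.val = 1 ∧ b.2.val = 7) ∨ (a.2.val = 7 ∧ b.2.val = 8))) ∨
  (b.1.val = a.1.val + 1 ∧ a.2.val = 1 ∧ b.2.val = 0)

/-- The coloring of Statement 10: `c(aᵢ¹) = c(aᵢ²) = i`, `c(bᵢ¹) = c(bᵢ²) = m + i`,
`c(e_{i,j}) = 2m + x_{i,j}`, `c(ρ_{i,j}) = 2m + 3q + 2(i−1) + j` (colors written in
`{1, …, 4m+3q}`, indices one-based). -/
def combColor (m q : ℕ) (x : Fin m → Fin 3 → Fin (3 * q)) (v : Fin m × Fin 9) : ℕ :=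
  match v.2.val with
  | 0 => 2 * m + 3 * q + 2 * v.1.val + 1
  | 1 => 2 * m + 3 * q + 2 * v.1.val + 2
  | 2 => v.1.val + 1
  | 3 => 2 * m + (x v.1 0).val + 1
  | 4 => 2 * m + (x v.1 1).val + 1
  | 5 => 2 * m + (x v.1 2).val + 1
  | 6 => m + v.1.val + 1
  | 7 => v.1.val + 1
  | _ => m + v.1.val + 1

def sigma9 : Fin 9 ≃ Fin 9 :=
  ⟨![2,5,0,1,3,4,7,6,8], ![2,3,0,4,5,1,7,6,8], by decide, by decide⟩

def combEquiv (m : ℕ) : Fin m × Fin 9 ≃ Fin (9 * m) :=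
  (Equiv.prodCongr (Equiv.refl _) sigma9).trans (finProdFinEquiv.trans (finCongr (Nat.mul_comm m 9)))

lemma combEquiv_val (m : ℕ) (v : Fin m × Fin 9) :
    ((combEquiv m) v).val = 9 * v.1.val + (sigma9 v.2).val := by
  simp [combEquiv, finProdFinEquiv]
  omega


lemma boundary {V : Type*} {G : SimpleGraph V} {R : Finset V}
    (hconn : (G.induce (R : Set V)).Connected) (S : Set V)
    {u v : V} (hu : u ∈ R) (hv : v ∈ R) (huS : u ∈ S) (hvS : v ∉ S) :
    ∃ a b : V, a ∈ R ∧ b ∈ R ∧ G.Adj a b ∧ a ∈ S ∧ b ∉ S := by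
  obtain ⟨p⟩ := hconn.preconnected ⟨u, by simp [hu]⟩ ⟨v, by simp [hv]⟩
  obtain ⟨d, _, h1, h2⟩ := p.exists_boundary_dart (Subtype.val ⁻¹' S) huS hvS
  have hadj := d.adj
  simp only [SimpleGraph.comap_adj, Function.Embedding.coe_subtype] at hadj
  exact ⟨d.toProd.1, d.toProd.2, by simpa using d.toProd.1.2, by simpa using d.toProd.2.2,
    hadj, h1, h2⟩

lemma color_inj (q m : ℕ) (x : Fin m → Fin 3 → Fin (3*q))
    (hx : ∀ i : Fin m, Function.Injective (x i)) (T : Finset (Fin m))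
    (hTu : ∀ (w : Fin (3*q)) (i i' : Fin m), i ∈ T → i' ∈ T →
      (∃ j, x i j = w) → (∃ j, x i' j = w) → i = i') :
    ∀ u v : Fin m × Fin 9,
      (u.2.val ≤ 1 ∨ (u.1 ∈ T ∧ 2 ≤ u.2.val ∧ u.2.val ≤ 6) ∨ (u.1 ∉ T ∧ 7 ≤ u.2.val)) →
      (v.2.val ≤ 1 ∨ (v.1 ∈ T ∧ 2 ≤ v.2.val ∧ v.2.val ≤ 6) ∨ (v.1 ∉ T ∧ 7 ≤ v.2.val)) →
      combColor m q x u = combColor m q x v → u = v := by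
  intro u v hu hv h
  obtain ⟨i, k⟩ := u; obtain ⟨k, hk⟩ := k
  obtain ⟨i', k'⟩ := v; obtain ⟨k', hk'⟩ := k'
  have hi := i.isLt; have hi' := i'.isLt
  have b0 := (x i 0).isLt; have b1 := (x i 1).isLt; have b2 := (x i 2).isLt
  have b0' := (x i' 0).isLt; have b1' := (x i' 1).isLt; have b2' := (x i' 2).isLt
  simp only at hu hv
  interval_cases k <;> interval_cases k' <;>
    simp only [combColor] at h <;>
    rcases hu with hu | ⟨huT, hu⟩ | ⟨huT, hu⟩ <;>
    rcases hv with hv | ⟨hvT, hv⟩ | ⟨hvT, hv⟩ <;>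
    first
    | (exfalso; omega)
    | (have hii : i = i' := Fin.ext (by omega); subst hii; rfl)
    | (have hii : i = i' := Fin.ext (by omega); subst hii; exact absurd huT hvT)
    | (have hii : i = i' := Fin.ext (by omega); subst hii; exact absurd hvT huT)
    | (have hii : i = i' := hTu _ i i' huT hvT ⟨0, rfl⟩
        (by first
          | exact ⟨0, Fin.ext (by omega)⟩
          | exact ⟨1, Fin.ext (by omega)⟩
          | exact ⟨2, Fin.ext (by omega)⟩)
       subst hii
       first
       | rfl
       | (exact absurd (show (0:Fin 3) = 1 from hx i (Fin.ext (by omega))) (by decide))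
       | (exact absurd (show (0:Fin 3) = 2 from hx i (Fin.ext (by omega))) (by decide))
       | (exact absurd (show (1:Fin 3) = 0 from hx i (Fin.ext (by omega))) (by decide))
       | (exact absurd (show (1:Fin 3) = 2 from hx i (Fin.ext (by omega))) (by decide))
       | (exact absurd (show (2:Fin 3) = 0 from hx i (Fin.ext (by omega))) (by decide))
       | (exact absurd (show (2:Fin 3) = 1 from hx i (Fin.ext (by omega))) (by decide))
       )
    | (have hii : i = i' := hTu _ i i' huT hvT ⟨1, rfl⟩
        (by first
          | exact ⟨0, Fin.ext (by omega)⟩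
          | exact ⟨1, Fin.ext (by omega)⟩
          | exact ⟨2, Fin.ext (by omega)⟩)
       subst hii
       first
       | rfl
       | (exact absurd (show (0:Fin 3) = 1 from hx i (Fin.ext (by omega))) (by decide))
       | (exact absurd (show (0:Fin 3) = 2 from hx i (Fin.ext (by omega))) (by decide))
       | (exact absurd (show (1:Fin 3) = 0 from hx i (Fin.ext (by omega))) (by decide))
       | (exact absurd (show (1:Fin 3) = 2 from hx i (Fin.ext (by omega))) (by decide))
       | (exact absurd (show (2:Fin 3) = 0 from hx i (Fin.ext (by omega))) (by decide))
       | (exact absurd (show (2:Fin 3) = 1 from hx i (Fin.ext (by omega))) (by decide))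
       )
    | (have hii : i = i' := hTu _ i i' huT hvT ⟨2, rfl⟩
        (by first
          | exact ⟨0, Fin.ext (by omega)⟩
          | exact ⟨1, Fin.ext (by omega)⟩
          | exact ⟨2, Fin.ext (by omega)⟩)
       subst hii
       first
       | rfl
       | (exact absurd (show (0:Fin 3) = 1 from hx i (Fin.ext (by omega))) (by decide))
       | (exact absurd (show (0:Fin 3) = 2 from hx i (Fin.ext (by omega))) (by decide))
       | (exact absurd (show (1:Fin 3) = 0 from hx i (Fin.ext (by omega))) (by decide))
       | (exact absurd (show (1:Fin 3) = 2 from hx i (Fin.ext (by omega))) (by decide))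
       | (exact absurd (show (2:Fin 3) = 0 from hx i (Fin.ext (by omega))) (by decide))
       | (exact absurd (show (2:Fin 3) = 1 from hx i (Fin.ext (by omega))) (by decide))
       )

lemma forward (q m : ℕ) (hq : 1 ≤ q) (hm : 1 ≤ m) (x : Fin m → Fin 3 → Fin (3*q))
    (hx : ∀ i : Fin m, Function.Injective (x i)) (R : Finset (Fin m × Fin 9))
    (hconn : ((SimpleGraph.fromRel (combRel m)).induce (R : Set _)).Connected)
    (hmap : Multiset.map (combColor m q x) R.val = (Multiset.range (4*m+3*q)).map (·+1)) :
    ∃ T : Finset (Fin m), ∀ w : Fin (3*q),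
      ∃! i : Fin m, i ∈ T ∧ ∃ j : Fin 3, x i j = w := by
  set c := combColor m q x with hc
  -- injectivity of c on R
  have hnodup : (Multiset.map c R.val).Nodup := by
    rw [hmap]
    exact (Multiset.nodup_range _).map (fun a b h => by omega)
  have hinj : ∀ u ∈ R, ∀ v ∈ R, c u = c v → u = v := fun u hu v hv h =>
    Multiset.inj_on_of_nodup_map hnodup u hu v hv h
  -- surjectivity
  have hsurj : ∀ k : ℕ, 1 ≤ k → k ≤ 4*m+3*q → ∃ v ∈ R, c v = k := by
    intro k h1 h2
    have : k ∈ Multiset.map c R.val := by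
      rw [hmap]
      simp only [Multiset.mem_map, Multiset.mem_range]
      exact ⟨k - 1, by omega, by omega⟩
    obtain ⟨v, hv, hcv⟩ := Multiset.mem_map.mp this
    exact ⟨v, hv, hcv⟩
  have hxlt : ∀ i j, (x i j).val < 3 * q := fun i j => (x i j).isLt
  -- spine vertices in R
  have hspine : ∀ (i : Fin m) (r : ℕ) (hr : r < 2), (i, ⟨r, by omega⟩) ∈ R := by
    intro i r hr
    obtain ⟨v, hv, hcv⟩ := hsurj (2*m+3*q+2*i.val+1+r) (by omega) (by have := i.isLt; omega)
    obtain ⟨i', k'⟩ := v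
    obtain ⟨k', hk'⟩ := k'
    have hi' := i'.isLt
    have h0 := hxlt i' 0; have h1 := hxlt i' 1; have h2 := hxlt i' 2
    have hii : i' = i ∧ k' = r := by
      interval_cases k' <;> simp [hc, combColor] at hcv <;>
        (try constructor) <;> (try exact Fin.ext (by omega)) <;> omega
    obtain ⟨rfl, rfl⟩ := hii
    exact hv
  have hsp0 : ∀ i : Fin m, (i, (⟨0, by omega⟩ : Fin 9)) ∈ R := fun i => hspine i 0 (by omega)
  -- exactly one of a¹, a²
  have ha : ∀ i : Fin m, ((i, (⟨2, by omega⟩:Fin 9)) ∈ R ∧ (i, (⟨7, by omega⟩:Fin 9)) ∉ R) ∨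
      ((i, (⟨7, by omega⟩:Fin 9)) ∈ R ∧ (i, (⟨2, by omega⟩:Fin 9)) ∉ R) := by
    intro i
    obtain ⟨v, hv, hcv⟩ := hsurj (i.val+1) (by omega) (by have := i.isLt; omega)
    have hne : (i, (⟨2, by omega⟩:Fin 9)) ≠ (i, (⟨7, by omega⟩:Fin 9)) := by
      intro h; exact absurd (congrArg (fun p => p.2.val) h) (by simp)
    have hboth : ¬((i, (⟨2, by omega⟩:Fin 9)) ∈ R ∧ (i, (⟨7, by omega⟩:Fin 9)) ∈ R) := by
      rintro ⟨h2, h7⟩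
      exact hne (hinj _ h2 _ h7 rfl)
    obtain ⟨i', k'⟩ := v
    obtain ⟨k', hk'⟩ := k'
    have hi' := i'.isLt; have hi := i.isLt
    have h0 := hxlt i' 0; have h1 := hxlt i' 1; have h2 := hxlt i' 2
    have : (i' = i ∧ k' = 2) ∨ (i' = i ∧ k' = 7) := by
      interval_cases k' <;> simp [hc, combColor] at hcv <;>
        [skip; skip; (left; exact ⟨Fin.ext (by omega), rfl⟩); skip; skip; skip; skip;
         (right; exact ⟨Fin.ext (by omega), rfl⟩); skip] <;> omega
    rcases this with ⟨rfl, rfl⟩ | ⟨rfl, rfl⟩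
    · exact Or.inl ⟨hv, fun h7 => hboth ⟨hv, h7⟩⟩
    · exact Or.inr ⟨hv, fun h2 => hboth ⟨h2, hv⟩⟩
  -- one of b¹, b²
  have hb : ∀ i : Fin m, (i, (⟨6, by omega⟩:Fin 9)) ∈ R ∨ (i, (⟨8, by omega⟩:Fin 9)) ∈ R := by
    intro i
    obtain ⟨v, hv, hcv⟩ := hsurj (m+i.val+1) (by omega) (by have := i.isLt; omega)
    obtain ⟨i', k'⟩ := v
    obtain ⟨k', hk'⟩ := k'
    have hi' := i'.isLt; have hi := i.isLt
    have h0 := hxlt i' 0; have h1 := hxlt i' 1; have h2 := hxlt i' 2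
    have : (i' = i ∧ k' = 6) ∨ (i' = i ∧ k' = 8) := by
      interval_cases k' <;> simp [hc, combColor] at hcv <;>
        [skip; skip; skip; skip; skip; skip; (left; exact ⟨Fin.ext (by omega), rfl⟩); skip;
         (right; exact ⟨Fin.ext (by omega), rfl⟩)] <;> omega
    rcases this with ⟨rfl, rfl⟩ | ⟨rfl, rfl⟩
    · exact Or.inl hv
    · exact Or.inr hv
  -- boundary step down the long tooth
  have hstep : ∀ (i : Fin m) (j : ℕ) (hj3 : 3 ≤ j) (hj6 : j ≤ 6), (i, (⟨j, by omega⟩:Fin 9)) ∈ R →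
      (i, (⟨j-1, by omega⟩:Fin 9)) ∈ R := by
    intro i j hj3 hj6 hmem
    obtain ⟨a, b, haR, hbR, hadj, haS, hbS⟩ := boundary hconn
      {v : Fin m × Fin 9 | v.1 = i ∧ j ≤ v.2.val ∧ v.2.val ≤ 6}
      hmem (hsp0 i) ⟨rfl, by simp, by simp; omega⟩ (by simp; intro _; omega)
    obtain ⟨rfl, ha2, ha6⟩ := haS
    simp only [Set.mem_setOf_eq, not_and, not_le] at hbS
    rw [SimpleGraph.fromRel_adj] at hadj
    have hb9 := b.2.isLt
    have : b = (a.1, (⟨j-1, by omega⟩:Fin 9)) := by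
      obtain ⟨-, h | h⟩ := hadj
      · rcases h with ⟨h1, h2⟩ | ⟨h1, h2, h3⟩
        · exfalso
          have hb1 : b.1 = a.1 := h1.symm
          have := hbS hb1
          omega
        · omega
      · rcases h with ⟨h1, h2⟩ | ⟨h1, h2, h3⟩
        · have hb1 : b.1 = a.1 := h1
          have := hbS hb1
          refine Prod.ext hb1 (Fin.ext ?_)
          simp only []
          omega
        · omega
    rw [this] at hbR
    exact hbR
  -- (i,8) ∈ R → (i,7) ∈ R
  have h87 : ∀ i : Fin m, (i, (⟨8, by omega⟩:Fin 9)) ∈ R → (i, (⟨7, by omega⟩:Fin 9)) ∈ R := by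
    intro i hmem
    obtain ⟨a, b, haR, hbR, hadj, haS, hbS⟩ := boundary hconn
      {v : Fin m × Fin 9 | v.1 = i ∧ v.2.val = 8}
      hmem (hsp0 i) ⟨rfl, rfl⟩ (by simp)
    obtain ⟨rfl, ha8⟩ := haS
    simp only [Set.mem_setOf_eq, not_and] at hbS
    rw [SimpleGraph.fromRel_adj] at hadj
    have hb9 := b.2.isLt
    have : b = (a.1, (⟨7, by omega⟩:Fin 9)) := by
      obtain ⟨-, h | h⟩ := hadj
      · rcases h with ⟨h1, h2⟩ | ⟨h1, h2, h3⟩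
        · omega
        · omega
      · rcases h with ⟨h1, h2⟩ | ⟨h1, h2, h3⟩
        · refine Prod.ext h1 (Fin.ext ?_)
          simp only []
          omega
        · omega
    rw [this] at hbR
    exact hbR
  -- long tooth: (i,2) ∈ R → e-vertices and b¹ ∈ R
  have htooth : ∀ (i : Fin m) (j : ℕ) (hj3 : 3 ≤ j) (hj6 : j ≤ 6),
      (i, (⟨2, by omega⟩:Fin 9)) ∈ R → (i, (⟨j, by omega⟩:Fin 9)) ∈ R := by
    intro i j hj3 hj6 h2
    have h7 : (i, (⟨7, by omega⟩:Fin 9)) ∉ R := by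
      rcases ha i with ⟨-, h⟩ | ⟨-, h⟩
      · exact h
      · exact absurd h2 h
    have h6 : (i, (⟨6, by omega⟩:Fin 9)) ∈ R := by
      rcases hb i with h | h
      · exact h
      · exact absurd (h87 i h) h7
    have h5 := hstep i 6 (by omega) (by omega) h6
    have h4 := hstep i 5 (by omega) (by omega) h5
    have h3 := hstep i 4 (by omega) (by omega) h4
    interval_cases j
    · exact h3
    · exact h4
    · exact h5
    · exact h6
  -- down: e-vertex ∈ R → (i,2) ∈ R
  have hdown : ∀ (i : Fin m) (j : ℕ) (hj3 : 3 ≤ j) (hj6 : j ≤ 5),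
      (i, (⟨j, by omega⟩:Fin 9)) ∈ R → (i, (⟨2, by omega⟩:Fin 9)) ∈ R := by
    intro i j hj3 hj6 h
    interval_cases j
    · exact hstep i 3 (by omega) (by omega) h
    · exact hstep i 3 (by omega) (by omega) (hstep i 4 (by omega) (by omega) h)
    · exact hstep i 3 (by omega) (by omega)
        (hstep i 4 (by omega) (by omega) (hstep i 5 (by omega) (by omega) h))
  -- build T
  refine ⟨Finset.univ.filter (fun i => (i, (⟨2, by omega⟩:Fin 9)) ∈ R), ?_⟩
  intro w
  obtain ⟨v, hv, hcv⟩ := hsurj (2*m + w.val + 1) (by omega) (by have := w.isLt; omega)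
  obtain ⟨i', k'⟩ := v
  obtain ⟨k', hk'⟩ := k'
  have hi' := i'.isLt
  have h0 := hxlt i' 0; have h1 := hxlt i' 1; have h2 := hxlt i' 2
  have hw := w.isLt
  have hcase : (k' = 3 ∧ x i' 0 = w) ∨ (k' = 4 ∧ x i' 1 = w) ∨ (k' = 5 ∧ x i' 2 = w) := by
    interval_cases k' <;> simp [hc, combColor] at hcv <;>
      [skip; skip; skip; (exact Or.inl ⟨rfl, Fin.ext (by omega)⟩);
       (exact Or.inr (Or.inl ⟨rfl, Fin.ext (by omega)⟩));
       (exact Or.inr (Or.inr ⟨rfl, Fin.ext (by omega)⟩)); skip; skip; skip] <;> omega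
  have h2R : (i', (⟨2, by omega⟩:Fin 9)) ∈ R := by
    rcases hcase with ⟨rfl, -⟩ | ⟨rfl, -⟩ | ⟨rfl, -⟩
    · exact hdown i' 3 (by omega) (by omega) hv
    · exact hdown i' 4 (by omega) (by omega) hv
    · exact hdown i' 5 (by omega) (by omega) hv
  refine ⟨i', ⟨by simp only [Finset.mem_filter, Finset.mem_univ, true_and]; exact h2R, ?_⟩, ?_⟩
  · rcases hcase with ⟨-, hj⟩ | ⟨-, hj⟩ | ⟨-, hj⟩
    · exact ⟨0, hj⟩
    · exact ⟨1, hj⟩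
    · exact ⟨2, hj⟩
  · rintro i'' ⟨hi''T, j'', hj''⟩
    simp only [Finset.mem_filter, Finset.mem_univ, true_and] at hi''T
    have hj9 : 3 + j''.val < 9 := by have := j''.isLt; omega
    have hvmem : (i'', (⟨3 + j''.val, hj9⟩:Fin 9)) ∈ R :=
      htooth i'' (3 + j''.val) (by omega) (by have := j''.isLt; omega) hi''T
    have hxw : (x i'' j'').val = w.val := by rw [hj'']
    have hcval : c (i'', (⟨3 + j''.val, hj9⟩:Fin 9)) = 2*m + (x i'' j'').val + 1 := by
      rcases j'' with ⟨jv, hjv⟩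
      interval_cases jv <;> simp [hc, combColor] <;> congr 1
    have heq := hinj _ hvmem _ hv (by rw [hcval, hcv]; omega)
    exact congrArg Prod.fst heq

lemma backward (q m : ℕ) (hq : 1 ≤ q) (hm : 1 ≤ m) (x : Fin m → Fin 3 → Fin (3*q))
    (hx : ∀ i : Fin m, Function.Injective (x i)) (T : Finset (Fin m))
    (hT : ∀ w : Fin (3*q), ∃! i : Fin m, i ∈ T ∧ ∃ j : Fin 3, x i j = w) :
    ∃ R : Finset (Fin m × Fin 9),
      ((SimpleGraph.fromRel (combRel m)).induce (R : Set _)).Connected ∧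
      Multiset.map (combColor m q x) R.val =
        (Multiset.range (4*m+3*q)).map (· + 1) := by
  classical
  set c := combColor m q x with hc
  set R : Finset (Fin m × Fin 9) := Finset.univ.filter (fun v =>
    v.2.val ≤ 1 ∨ (v.1 ∈ T ∧ 2 ≤ v.2.val ∧ v.2.val ≤ 6) ∨ (v.1 ∉ T ∧ 7 ≤ v.2.val))
    with hR
  have hmem : ∀ v : Fin m × Fin 9, v ∈ R ↔
      (v.2.val ≤ 1 ∨ (v.1 ∈ T ∧ 2 ≤ v.2.val ∧ v.2.val ≤ 6) ∨ (v.1 ∉ T ∧ 7 ≤ v.2.val)) := by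
    intro v; simp [hR]
  have hmem' : ∀ (i : Fin m) (k : ℕ) (hk : k < 9), ((i, (⟨k, hk⟩ : Fin 9)) ∈ R) ↔
      (k ≤ 1 ∨ (i ∈ T ∧ 2 ≤ k ∧ k ≤ 6) ∨ (i ∉ T ∧ 7 ≤ k)) := by
    intro i k hk; rw [hmem]
  refine ⟨R, ?_, ?_⟩
  · -- connectivity
    have hrne : ∀ {a b : Fin m × Fin 9}, combRel m a b → a ≠ b := by
      rintro a b h rfl
      rcases h with ⟨-, h⟩ | ⟨h, -, -⟩ <;> omega
    have hadjG : ∀ (a b : Fin m × Fin 9), combRel m a b →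
        (SimpleGraph.fromRel (combRel m)).Adj a b := fun a b h =>
      (SimpleGraph.fromRel_adj _ _ _).mpr ⟨hrne h, Or.inl h⟩
    have step : ∀ (a b : Fin m × Fin 9) (ha : a ∈ R) (hb : b ∈ R), combRel m a b →
        ((SimpleGraph.fromRel (combRel m)).induce (R : Set (Fin m × Fin 9))).Reachable
          ⟨a, by simpa using ha⟩ ⟨b, by simpa using hb⟩ := by
      intro a b ha hb h
      refine SimpleGraph.Adj.reachable ?_
      simp only [SimpleGraph.comap_adj, Function.Embedding.coe_subtype]
      exact hadjG a b h
    have rel : ∀ (i : Fin m) (a b : ℕ) (ha : a < 9) (hb : b < 9),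
        ((a = 0 ∧ b = 1) ∨ (a = 0 ∧ b = 2) ∨ (a = 2 ∧ b = 3) ∨ (a = 3 ∧ b = 4) ∨
         (a = 4 ∧ b = 5) ∨ (a = 5 ∧ b = 6) ∨ (a = 1 ∧ b = 7) ∨ (a = 7 ∧ b = 8)) →
        combRel m (i, ⟨a, ha⟩) (i, ⟨b, hb⟩) := by
      intro i a b ha hb h
      exact Or.inl ⟨rfl, h⟩
    have m01 : ∀ (i : Fin m) (k : ℕ) (hk : k ≤ 1), (i, (⟨k, by omega⟩ : Fin 9)) ∈ R :=
      fun i k hk => (hmem' i k (by omega)).mpr (Or.inl hk)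
    have mT : ∀ (i : Fin m), i ∈ T → ∀ (k : ℕ) (h2 : 2 ≤ k) (h6 : k ≤ 6),
        (i, (⟨k, by omega⟩ : Fin 9)) ∈ R :=
      fun i hi k h2 h6 => (hmem' i k (by omega)).mpr (Or.inr (Or.inl ⟨hi, h2, h6⟩))
    have mT' : ∀ (i : Fin m), i ∉ T → ∀ (k : ℕ) (h7 : 7 ≤ k) (h8 : k ≤ 8),
        (i, (⟨k, by omega⟩ : Fin 9)) ∈ R :=
      fun i hi k h7 h8 => (hmem' i k (by omega)).mpr (Or.inr (Or.inr ⟨hi, h7⟩))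
    have hreach0 : ∀ (v : Fin m × Fin 9) (hv : v ∈ R),
        ((SimpleGraph.fromRel (combRel m)).induce (R : Set (Fin m × Fin 9))).Reachable
          ⟨v, by simpa using hv⟩ ⟨(v.1, ⟨0, by omega⟩), by simpa using m01 v.1 0 (by omega)⟩ := by
      rintro ⟨i, k⟩ hv
      obtain ⟨k, hk⟩ := k
      have hv' := (hmem' i k hk).mp hv
      interval_cases k
      · exact SimpleGraph.Reachable.refl _
      · exact (step (i, ⟨0, by omega⟩) (i, ⟨1, by omega⟩) (m01 i 0 (by omega)) (m01 i 1 (by omega))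
          (rel _ _ _ _ _ (by omega))).symm
      · have hiT : i ∈ T := by rcases hv' with h | ⟨h', -⟩ | ⟨-, h⟩ <;> first | omega | exact h'
        exact (step (i, ⟨0, by omega⟩) (i, ⟨2, by omega⟩) (m01 i 0 (by omega))
          (mT i hiT 2 (by omega) (by omega)) (rel _ _ _ _ _ (by omega))).symm
      · have hiT : i ∈ T := by rcases hv' with h | ⟨h', -⟩ | ⟨-, h⟩ <;> first | omega | exact h'
        exact ((step (i, ⟨2, by omega⟩) (i, ⟨3, by omega⟩) (mT i hiT 2 (by omega) (by omega))
            (mT i hiT 3 (by omega) (by omega)) (rel _ _ _ _ _ (by omega))).symm).trans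
          ((step (i, ⟨0, by omega⟩) (i, ⟨2, by omega⟩) (m01 i 0 (by omega))
            (mT i hiT 2 (by omega) (by omega)) (rel _ _ _ _ _ (by omega))).symm)
      · have hiT : i ∈ T := by rcases hv' with h | ⟨h', -⟩ | ⟨-, h⟩ <;> first | omega | exact h'
        exact ((step (i, ⟨3, by omega⟩) (i, ⟨4, by omega⟩) (mT i hiT 3 (by omega) (by omega))
            (mT i hiT 4 (by omega) (by omega)) (rel _ _ _ _ _ (by omega))).symm).trans
          (((step (i, ⟨2, by omega⟩) (i, ⟨3, by omega⟩) (mT i hiT 2 (by omega) (by omega))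
            (mT i hiT 3 (by omega) (by omega)) (rel _ _ _ _ _ (by omega))).symm).trans
          ((step (i, ⟨0, by omega⟩) (i, ⟨2, by omega⟩) (m01 i 0 (by omega))
            (mT i hiT 2 (by omega) (by omega)) (rel _ _ _ _ _ (by omega))).symm))
      · have hiT : i ∈ T := by rcases hv' with h | ⟨h', -⟩ | ⟨-, h⟩ <;> first | omega | exact h'
        exact ((step (i, ⟨4, by omega⟩) (i, ⟨5, by omega⟩) (mT i hiT 4 (by omega) (by omega))
            (mT i hiT 5 (by omega) (by omega)) (rel _ _ _ _ _ (by omega))).symm).trans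
          (((step (i, ⟨3, by omega⟩) (i, ⟨4, by omega⟩) (mT i hiT 3 (by omega) (by omega))
            (mT i hiT 4 (by omega) (by omega)) (rel _ _ _ _ _ (by omega))).symm).trans
          (((step (i, ⟨2, by omega⟩) (i, ⟨3, by omega⟩) (mT i hiT 2 (by omega) (by omega))
            (mT i hiT 3 (by omega) (by omega)) (rel _ _ _ _ _ (by omega))).symm).trans
          ((step (i, ⟨0, by omega⟩) (i, ⟨2, by omega⟩) (m01 i 0 (by omega))
            (mT i hiT 2 (by omega) (by omega)) (rel _ _ _ _ _ (by omega))).symm)))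
      · have hiT : i ∈ T := by rcases hv' with h | ⟨h', -⟩ | ⟨-, h⟩ <;> first | omega | exact h'
        exact ((step (i, ⟨5, by omega⟩) (i, ⟨6, by omega⟩) (mT i hiT 5 (by omega) (by omega))
            (mT i hiT 6 (by omega) (by omega)) (rel _ _ _ _ _ (by omega))).symm).trans
          (((step (i, ⟨4, by omega⟩) (i, ⟨5, by omega⟩) (mT i hiT 4 (by omega) (by omega))
            (mT i hiT 5 (by omega) (by omega)) (rel _ _ _ _ _ (by omega))).symm).trans
          (((step (i, ⟨3, by omega⟩) (i, ⟨4, by omega⟩) (mT i hiT 3 (by omega) (by omega))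
            (mT i hiT 4 (by omega) (by omega)) (rel _ _ _ _ _ (by omega))).symm).trans
          (((step (i, ⟨2, by omega⟩) (i, ⟨3, by omega⟩) (mT i hiT 2 (by omega) (by omega))
            (mT i hiT 3 (by omega) (by omega)) (rel _ _ _ _ _ (by omega))).symm).trans
          ((step (i, ⟨0, by omega⟩) (i, ⟨2, by omega⟩) (m01 i 0 (by omega))
            (mT i hiT 2 (by omega) (by omega)) (rel _ _ _ _ _ (by omega))).symm))))
      · have hiT : i ∉ T := by rcases hv' with h | ⟨-, -, h⟩ | ⟨h', -⟩ <;> first | omega | exact h'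
        exact ((step (i, ⟨1, by omega⟩) (i, ⟨7, by omega⟩) (m01 i 1 (by omega))
            (mT' i hiT 7 (by omega) (by omega)) (rel _ _ _ _ _ (by omega))).symm).trans
          ((step (i, ⟨0, by omega⟩) (i, ⟨1, by omega⟩) (m01 i 0 (by omega))
            (m01 i 1 (by omega)) (rel _ _ _ _ _ (by omega))).symm)
      · have hiT : i ∉ T := by rcases hv' with h | ⟨-, -, h⟩ | ⟨h', -⟩ <;> first | omega | exact h'
        exact ((step (i, ⟨7, by omega⟩) (i, ⟨8, by omega⟩) (mT' i hiT 7 (by omega) (by omega))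
            (mT' i hiT 8 (by omega) (by omega)) (rel _ _ _ _ _ (by omega))).symm).trans
          ((((step (i, ⟨1, by omega⟩) (i, ⟨7, by omega⟩) (m01 i 1 (by omega))
            (mT' i hiT 7 (by omega) (by omega)) (rel _ _ _ _ _ (by omega))).symm).trans
          ((step (i, ⟨0, by omega⟩) (i, ⟨1, by omega⟩) (m01 i 0 (by omega))
            (m01 i 1 (by omega)) (rel _ _ _ _ _ (by omega))).symm)))
    have hspineR : ∀ (n : ℕ) (hn : n < m),
        ((SimpleGraph.fromRel (combRel m)).induce (R : Set (Fin m × Fin 9))).Reachable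
          ⟨((⟨n, hn⟩ : Fin m), ⟨0, by omega⟩), by simpa using m01 ⟨n, hn⟩ 0 (by omega)⟩
          ⟨((⟨0, by omega⟩ : Fin m), ⟨0, by omega⟩), by simpa using m01 ⟨0, by omega⟩ 0 (by omega)⟩ := by
      intro n
      induction n with
      | zero => intro hn; exact SimpleGraph.Reachable.refl _
      | succ n ih =>
        intro hn
        have hn' : n < m := by omega
        have s1 := (step ((⟨n, hn'⟩ : Fin m), ⟨1, by omega⟩) ((⟨n+1, hn⟩ : Fin m), ⟨0, by omega⟩)
            (m01 _ 1 (by omega)) (m01 _ 0 (by omega)) (Or.inr ⟨rfl, rfl, rfl⟩)).symm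
        have s2 := (step ((⟨n, hn'⟩ : Fin m), ⟨0, by omega⟩) ((⟨n, hn'⟩ : Fin m), ⟨1, by omega⟩)
            (m01 _ 0 (by omega)) (m01 _ 1 (by omega)) (rel _ _ _ _ _ (by omega))).symm
        exact s1.trans (s2.trans (ih hn'))
    rw [SimpleGraph.connected_iff]
    refine ⟨?_, ⟨⟨((⟨0, by omega⟩ : Fin m), ⟨0, by omega⟩), by
      simpa using m01 ⟨0, by omega⟩ 0 (by omega)⟩⟩⟩
    rintro ⟨a, ha⟩ ⟨b, hb⟩
    have ha' : a ∈ R := by simpa using ha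
    have hb' : b ∈ R := by simpa using hb
    have r1 := (hreach0 a ha').trans (hspineR a.1.val a.1.isLt)
    have r2 := (hreach0 b hb').trans (hspineR b.1.val b.1.isLt)
    exact r1.trans r2.symm
  · -- multiset equality
    have hTu : ∀ (w : Fin (3*q)) (i i' : Fin m), i ∈ T → i' ∈ T →
        (∃ j, x i j = w) → (∃ j, x i' j = w) → i = i' := by
      intro w i i' hi hi' hj hj'
      obtain ⟨z, -, hz⟩ := hT w
      rw [hz i ⟨hi, hj⟩, hz i' ⟨hi', hj'⟩]
    have hMnodup : ((Multiset.range (4*m+3*q)).map (· + 1)).Nodup :=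
      (Multiset.nodup_range _).map (fun a b hab => by omega)
    have hRnodup : (R.val.map c).Nodup := by
      refine Multiset.Nodup.map_on ?_ R.nodup
      intro u hu v hv hcc
      exact color_inj q m x hx T hTu u v ((hmem u).mp hu) ((hmem v).mp hv) hcc
    rw [Multiset.Nodup.ext hRnodup hMnodup]
    intro k
    simp only [Multiset.mem_map, Multiset.mem_range]
    constructor
    · rintro ⟨v, hv, rfl⟩
      rw [Finset.mem_val, hmem] at hv
      obtain ⟨i, j⟩ := v; obtain ⟨j, hj⟩ := j
      have hi := i.isLt
      have b0 := (x i 0).isLt; have b1 := (x i 1).isLt; have b2 := (x i 2).isLt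
      refine ⟨c (i, ⟨j, hj⟩) - 1, ?_, by
        have : 1 ≤ c (i, ⟨j, hj⟩) := by
          interval_cases j <;> simp [hc, combColor] <;> omega
        omega⟩
      interval_cases j <;> simp [hc, combColor] <;> omega
    · rintro ⟨k, hk, rfl⟩
      -- produce a vertex with color k+1
      rcases lt_or_ge k m with h1 | h1
      · -- a-colors
        set i : Fin m := ⟨k, h1⟩
        by_cases hiT : i ∈ T
        · have hmm : (i, (⟨2, by omega⟩ : Fin 9)) ∈ R := by
            rw [hmem' _ _ (by omega)]; exact Or.inr (Or.inl ⟨hiT, by omega, by omega⟩)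
          exact ⟨(i, ⟨2, by omega⟩), hmm, by simp [hc, combColor, i]⟩
        · have hmm : (i, (⟨7, by omega⟩ : Fin 9)) ∈ R := by
            rw [hmem' _ _ (by omega)]; exact Or.inr (Or.inr ⟨hiT, by omega⟩)
          exact ⟨(i, ⟨7, by omega⟩), hmm, by simp [hc, combColor, i]⟩
      rcases lt_or_ge k (2*m) with h2 | h2
      · -- b-colors
        set i : Fin m := ⟨k - m, by omega⟩
        by_cases hiT : i ∈ T
        · have hmm : (i, (⟨6, by omega⟩ : Fin 9)) ∈ R := by
            rw [hmem' _ _ (by omega)]; exact Or.inr (Or.inl ⟨hiT, by omega, by omega⟩)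
          refine ⟨(i, ⟨6, by omega⟩), hmm, ?_⟩
          simp [hc, combColor, i]
          omega
        · have hmm : (i, (⟨8, by omega⟩ : Fin 9)) ∈ R := by
            rw [hmem' _ _ (by omega)]; exact Or.inr (Or.inr ⟨hiT, by omega⟩)
          refine ⟨(i, ⟨8, by omega⟩), hmm, ?_⟩
          simp [hc, combColor, i]
          omega
      rcases lt_or_ge k (2*m + 3*q) with h3 | h3
      · -- e-colors
        set w : Fin (3*q) := ⟨k - 2*m, by omega⟩
        obtain ⟨i, ⟨hiT, j, hj⟩, -⟩ := hT w
        have hxw : (x i j).val = w.val := by rw [hj]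
        have hwval : w.val = k - 2*m := rfl
        fin_cases j <;> simp only [Fin.zero_eta, Fin.mk_one, show (⟨2, by omega⟩ : Fin 3) = 2 from rfl] at hxw
        · have hmm : (i, (⟨3, by omega⟩ : Fin 9)) ∈ R := by
            rw [hmem' _ _ (by omega)]; exact Or.inr (Or.inl ⟨hiT, by omega, by omega⟩)
          refine ⟨(i, ⟨3, by omega⟩), hmm, ?_⟩
          simp only [hc, combColor] at hxw ⊢
          omega
        · have hmm : (i, (⟨4, by omega⟩ : Fin 9)) ∈ R := by
            rw [hmem' _ _ (by omega)]; exact Or.inr (Or.inl ⟨hiT, by omega, by omega⟩)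
          refine ⟨(i, ⟨4, by omega⟩), hmm, ?_⟩
          simp only [hc, combColor] at hxw ⊢
          omega
        · have hmm : (i, (⟨5, by omega⟩ : Fin 9)) ∈ R := by
            rw [hmem' _ _ (by omega)]; exact Or.inr (Or.inl ⟨hiT, by omega, by omega⟩)
          refine ⟨(i, ⟨5, by omega⟩), hmm, ?_⟩
          simp only [hc, combColor] at hxw ⊢
          omega
      · -- spine colors
        obtain ⟨i, hi, r, hr, hkr⟩ : ∃ i, i < m ∧ ∃ r, r < 2 ∧ k = 2*m+3*q+2*i+r := by
          refine ⟨(k - 2*m - 3*q)/2, by omega, (k - 2*m - 3*q) % 2, by omega, by omega⟩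
        have hmm : ((⟨i, hi⟩ : Fin m), (⟨r, by omega⟩ : Fin 9)) ∈ R := by
          rw [hmem' _ _ (by omega)]; left; omega
        refine ⟨(⟨i, hi⟩, ⟨r, by omega⟩), hmm, ?_⟩
        interval_cases r <;> simp [hc, combColor] <;> omega

/-- (1) The comb graph `H` has bandwidth at most 6, and (2) with `M`
containing each color of `{1, …, 4m+3q}` exactly once, the instance `(H, c, M)` has a
motif solution iff the sets `S_i = {x_{i,1}, x_{i,2}, x_{i,3}}` admit an exact cover by
3-sets of `{1, …, 3q}`. -/
theorem stmt_10 (q m : ℕ) (hq : 1 ≤ q) (x : Fin m → Fin 3 → Fin (3 * q))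
    (hx : ∀ i : Fin m, Function.Injective (x i)) :
    (∃ f : (Fin m × Fin 9) ≃ Fin (9 * m), ∀ u v : Fin m × Fin 9,
      (SimpleGraph.fromRel (combRel m)).Adj u v →
        (f u).val - (f v).val ≤ 6 ∧ (f v).val - (f u).val ≤ 6) ∧
    ((∃ R : Finset (Fin m × Fin 9),
      IsMotifSolution (SimpleGraph.fromRel (combRel m)) (combColor m q x)
        ((Multiset.range (4 * m + 3 * q)).map (· + 1)) R) ↔
    ∃ T : Finset (Fin m), ∀ w : Fin (3 * q),
      ∃! i : Fin m, i ∈ T ∧ ∃ j : Fin 3, x i j = w) := by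
  constructor
  · -- bandwidth at most 6
    refine ⟨combEquiv m, ?_⟩
    have key : ∀ a b : Fin 9,
        ((a.val = 0 ∧ b.val = 1) ∨ (a.val = 0 ∧ b.val = 2) ∨
         (a.val = 2 ∧ b.val = 3) ∨ (a.val = 3 ∧ b.val = 4) ∨
         (a.val = 4 ∧ b.val = 5) ∨ (a.val = 5 ∧ b.val = 6) ∨
         (a.val = 1 ∧ b.val = 7) ∨ (a.val = 7 ∧ b.val = 8)) →
        (sigma9 a).val ≤ (sigma9 b).val + 3 ∧ (sigma9 b).val ≤ (sigma9 a).val + 3 := by decide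
    have k1 : ∀ a : Fin 9, a.val = 1 → (sigma9 a).val = 5 := by decide
    have k0 : ∀ a : Fin 9, a.val = 0 → (sigma9 a).val = 2 := by decide
    intro u v hadj
    rw [SimpleGraph.fromRel_adj] at hadj
    obtain ⟨-, h | h⟩ := hadj <;>
    · have hu := combEquiv_val m u
      have hv := combEquiv_val m v
      rcases h with ⟨h1, h2⟩ | ⟨h1, h2, h3⟩
      · have := key _ _ h2
        have : u.1.val = v.1.val := by rw [h1]
        omega
      · have := k1 _ h2
        have := k0 _ h3
        omega
  · constructor
    · rintro ⟨R, hconn, hmap⟩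
      rcases Nat.eq_zero_or_pos m with hm0 | hm
      · exfalso
        have hR : R = ∅ := Finset.eq_empty_of_forall_notMem
          (fun v _ => absurd v.1.isLt (by omega))
        rw [hR] at hmap
        have := congrArg Multiset.card hmap
        simp at this
        omega
      · exact forward q m hq hm x hx R hconn hmap
    · rintro ⟨T, hT⟩
      rcases Nat.eq_zero_or_pos m with hm0 | hm
      · obtain ⟨i, -, -⟩ := hT ⟨0, by omega⟩
        exact absurd i.isLt (by omega)
      · obtain ⟨R, h1, h2⟩ := backward q m hq hm x hx T hT
        exact ⟨R, h1, h2⟩
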